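/- Let D ∈ [0, 1), τ^Y > 0, and let τ, R, γ̇, Ḋ, 𝒟ᵛᵉ, 𝒟ᵛᵖ, Y be real numbers with γ̇ ≥ 0, Ḋ ≥ 0, 𝒟ᵛᵉ ≥ 0, 𝒟ᵛᵖ ≥ 0, Y ≤ 0, satisfying the persistency condition (|τ| − ((1 − D) τ^Y + R)) · γ̇ = 0. Define the visco-plastic strain rate ε̇ᵛᵖ = sign(τ) · γ̇ (with sign(0) = 0) and the hardening rate α̇ = γ̇. Then the total mechanical dissipation satisfies τ · ε̇ᵛᵖ − R · α̇ − Y · Ḋ + (1 − D)(𝒟ᵛᵉ + 𝒟ᵛᵖ) = (1 − D)(τ^Y · γ̇ + 𝒟ᵛᵉ + 𝒟ᵛᵖ) − Y · Ḋ ≥ 0. -/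
import Mathlib


/-- Positive dissipation for the damaged fractional visco-elasto-plastic model:
with `ε̇ᵛᵖ = sign(τ) γ̇` and `α̇ = γ̇`, under the persistency condition
`(|τ| - ((1-D)τ^Y + R)) γ̇ = 0`, the total mechanical dissipation equals
`(1-D)(τ^Y γ̇ + 𝒟ᵛᵉ + 𝒟ᵛᵖ) - Y Ḋ` and is nonnegative. -/
theorem stmt7 (D τY τ R γ' D' Dve Dvp Y : ℝ)
    (hD : D ∈ Set.Ico (0 : ℝ) 1) (hτY : 0 < τY)
    (hγ : 0 ≤ γ') (hD' : 0 ≤ D') (hDve : 0 ≤ Dve) (hDvp : 0 ≤ Dvp) (hY : Y ≤ 0)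
    (hpers : (|τ| - ((1 - D) * τY + R)) * γ' = 0) :
    τ * (Real.sign τ * γ') - R * γ' - Y * D' + (1 - D) * (Dve + Dvp)
      = (1 - D) * (τY * γ' + Dve + Dvp) - Y * D' ∧
    0 ≤ (1 - D) * (τY * γ' + Dve + Dvp) - Y * D' := by
  have hsign : τ * Real.sign τ = |τ| := by
    rcases lt_trichotomy τ 0 with h | h | h
    · rw [Real.sign_of_neg h, abs_of_neg h]; ring
    · simp [h]
    · rw [Real.sign_of_pos h, abs_of_pos h]; ring
  have h1D : 0 < 1 - D := by linarith [hD.2]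
  have key : |τ| * γ' = ((1 - D) * τY + R) * γ' := by nlinarith [hpers]
  constructor
  · have : τ * (Real.sign τ * γ') = |τ| * γ' := by rw [← hsign]; ring
    rw [this, key]; ring
  · have := mul_nonneg h1D.le (by positivity : (0:ℝ) ≤ τY * γ' + Dve + Dvp)
    nlinarith [mul_nonneg (neg_nonneg.mpr hY) hD']
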